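/- Let π be a permutation of X and Γ = {(x,y)π^i : 0 ≤ i < s} a cycle of length s of the coordinatewise action of π on X × X, with Γ not contained in the diagonal. Then Γ is symmetric (closed under the twist (x,y) ↦ (y,x)) if and only if s is even and Γ = {(x, xπ^{s/2})π^i : 0 ≤ i < s} for some x lying in a cycle of π of length s. -/

import Mathlib

lemma perm_mem_periodicPts {Y : Type*} [Finite Y] (f : Equiv.Perm Y) (x : Y) :
    x ∈ Function.periodicPts f := by
  refine ⟨orderOf f, orderOf_pos f, ?_⟩
  show f^[orderOf f] x = x
  rw [← Equiv.Perm.coe_pow, pow_orderOf_eq_one]; rfl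

lemma perm_orbit_ncard {Y : Type*} [Finite Y] (f : Equiv.Perm Y) (x : Y) :
    ({z | ∃ i : ℕ, (f ^ i) x = z}).ncard = Function.minimalPeriod f x := by
  have hset : {z | ∃ i : ℕ, (f ^ i) x = z}
      = (fun i => f^[i] x) '' Set.Iio (Function.minimalPeriod f x) := by
    ext z
    simp only [Set.mem_setOf_eq, Set.mem_image, Set.mem_Iio, Equiv.Perm.coe_pow]
    constructor
    · rintro ⟨i, rfl⟩
      exact ⟨i % Function.minimalPeriod f x,
        Nat.mod_lt _ (Function.minimalPeriod_pos_of_mem_periodicPts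
          (perm_mem_periodicPts f x)),
        Function.iterate_mod_minimalPeriod_eq⟩
    · rintro ⟨i, _, rfl⟩; exact ⟨i, rfl⟩
  rw [hset, Set.ncard_image_of_injOn Function.iterate_injOn_Iio_minimalPeriod]
  rw [← Finset.coe_range, Set.ncard_coe_finset, Finset.card_range]

lemma prodCongr_pow_apply {X : Type*} (π : Equiv.Perm X) (i : ℕ) (a b : X) :
    ((Equiv.prodCongr π π) ^ i) (a, b) = ((π ^ i) a, (π ^ i) b) := by
  induction i with
  | zero => rfl
  | succ n ih =>
      rw [pow_succ' (Equiv.prodCongr π π) n, pow_succ' π n]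
      simp only [Equiv.Perm.mul_apply, ih]
      rfl

lemma perm_pow_apply_eq_iterate {X : Type*} (π : Equiv.Perm X) (i : ℕ) (a : X) :
    (π ^ i) a = (⇑π)^[i] a := by rw [Equiv.Perm.coe_pow]

/-- A non-diagonal cycle `Γ` of length `s` of the coordinatewise action of `π`
on `X × X` is symmetric (closed under the twist) iff `s` is even and
`Γ = {(x₀, x₀π^{s/2})π^i : 0 ≤ i < s}` for some `x₀` lying in a cycle of `π`
of length `s`. -/
theorem stmt11 {X : Type*} [Fintype X] (π : Equiv.Perm X) (x y : X) (s : ℕ)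
    (Γ : Set (X × X))
    (hΓ : Γ = {p | ∃ i : ℕ, ((Equiv.prodCongr π π) ^ i) (x, y) = p})
    (hs : Γ.ncard = s)
    (hnd : ¬Γ ⊆ {p : X × X | p.1 = p.2}) :
    (∀ p ∈ Γ, (p.2, p.1) ∈ Γ) ↔
      (Even s ∧ ∃ x₀ : X, ({z | ∃ i : ℕ, (π ^ i) x₀ = z}).ncard = s ∧
        Γ = {p | ∃ i : ℕ, ((Equiv.prodCongr π π) ^ i) (x₀, (π ^ (s / 2)) x₀) = p}) := by
  set a := Function.minimalPeriod (⇑π) x with ha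
  set b := Function.minimalPeriod (⇑π) y with hb
  have hxp : x ∈ Function.periodicPts (⇑π) := perm_mem_periodicPts π x
  have hapos : 0 < a := Function.minimalPeriod_pos_of_mem_periodicPts hxp
  have hcoe : ⇑(Equiv.prodCongr π π) = Prod.map ⇑π ⇑π := rfl
  have hsn : s = Nat.lcm a b := by
    rw [← hs, hΓ, perm_orbit_ncard, hcoe, Function.minimalPeriod_prodMap]
  have hxy : x ≠ y := by
    intro h
    apply hnd
    rw [hΓ]
    rintro p ⟨i, rfl⟩
    rw [prodCongr_pow_apply, h]
    rfl
  constructor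
  · intro hsym
    have hmem : (x, y) ∈ Γ := by rw [hΓ]; exact ⟨0, rfl⟩
    have hswap := hsym _ hmem
    rw [hΓ] at hswap
    simp only [Set.mem_setOf_eq, prodCongr_pow_apply, Prod.mk.injEq] at hswap
    obtain ⟨k, hkx, hky⟩ := hswap
    have hba : b = a := by
      rw [hb, ← hkx, perm_pow_apply_eq_iterate,
        Function.minimalPeriod_apply_iterate hxp]
    have hsa : s = a := by rw [hsn, hba, Nat.lcm_self]
    have h2k : Function.IsPeriodicPt (⇑π) (k + k) x := by
      show (⇑π)^[k + k] x = x
      rw [← perm_pow_apply_eq_iterate, pow_add, Equiv.Perm.mul_apply, hkx, hky]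
    have hadvd : a ∣ k + k := Function.IsPeriodicPt.minimalPeriod_dvd h2k
    have hndvd : ¬ a ∣ k := by
      intro hdvd
      apply hxy
      rw [← hkx, perm_pow_apply_eq_iterate,
        (Function.isPeriodicPt_iff_minimalPeriod_dvd.2 hdvd : (⇑π)^[k] x = x)]
    set r := k % a with hr
    have hrlt : r < a := Nat.mod_lt _ hapos
    have hrpos : 0 < r := by
      rcases Nat.eq_zero_or_pos r with h0 | h0
      · exact absurd (Nat.dvd_of_mod_eq_zero (hr ▸ h0)) hndvd
      · exact h0
    have hdvdrr : a ∣ r + r := by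
      apply Nat.dvd_of_mod_eq_zero
      rw [hr, ← Nat.add_mod]
      obtain ⟨c, hc⟩ := hadvd
      rw [hc, Nat.mul_mod_right]
    have hra : r + r = a := by
      have h1 : a ≤ r + r := Nat.le_of_dvd (by omega) hdvdrr
      have h2 : r + r < a + a := by omega
      obtain ⟨m, hm⟩ := hdvdrr
      have hma : a * m < a * 2 := by rw [← hm]; omega
      have hm2 : m < 2 := Nat.lt_of_mul_lt_mul_left hma
      have hm0 : 0 < m := by
        rcases Nat.eq_zero_or_pos m with h0 | h0
        · rw [h0, Nat.mul_zero] at hm; omega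
        · exact h0
      have hm1 : m = 1 := by omega
      rw [hm1, Nat.mul_one] at hm
      omega
    have hevs : Even s := by rw [hsa]; exact ⟨r, hra.symm⟩
    have hs2 : s / 2 = r := by omega
    have hy : (π ^ (s / 2)) x = y := by
      rw [← hkx, hs2, perm_pow_apply_eq_iterate, perm_pow_apply_eq_iterate, hr, ha]
      exact Function.iterate_mod_minimalPeriod_eq
    refine ⟨hevs, x, ?_, ?_⟩
    · rw [perm_orbit_ncard, ← ha]
      exact hsa.symm
    · rw [hΓ, hy]
  · rintro ⟨hev, x₀, hx₀, hΓ'⟩ p hp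
    rw [hΓ'] at hp ⊢
    obtain ⟨i, rfl⟩ := hp
    have hs' : Function.minimalPeriod (⇑π) x₀ = s := by
      rw [← perm_orbit_ncard]; exact hx₀
    obtain ⟨t, ht⟩ := hev
    have ht2 : s / 2 = t := by omega
    have hper : (π ^ s) x₀ = x₀ := by
      rw [perm_pow_apply_eq_iterate, ← hs']
      exact Function.iterate_minimalPeriod
    refine ⟨i + t, ?_⟩
    rw [prodCongr_pow_apply, prodCongr_pow_apply, ht2, Prod.ext_iff]
    constructor
    · show (π ^ (i + t)) x₀ = (π ^ i) ((π ^ t) x₀)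
      rw [pow_add, Equiv.Perm.mul_apply]
    · show (π ^ (i + t)) ((π ^ t) x₀) = (π ^ i) x₀
      rw [← Equiv.Perm.mul_apply, ← pow_add]
      have : i + t + t = i + s := by omega
      rw [this, pow_add, Equiv.Perm.mul_apply, hper]
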